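/- Let K₁ and K₂ be Kendall distribution functions of two-dimensional Archimedean copulas with continuously differentiable strictly decreasing generators φ₁, φ₂ normalized by φᵢ(u₀) = 1 at some fixed u₀ ∈ (0,1), where K_{φ}(t) = t − φ(t)/φ'(t) for t ∈ (0,1). If K₁ = K₂ on (0,1), then φ₁ = φ₂ on (0,1). -/

import Mathlib

/-- Two-dimensional identifiability of the Archimedean model from Kendall's distribution
function: if two continuously differentiable, strictly decreasing generators `φ₁, φ₂`
(with `φᵢ(1) = 0`, `φᵢ' < 0` on `(0,1)`), normalized by `φᵢ(u₀) = 1` at some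
`u₀ ∈ (0,1)`, have the same Kendall distribution function
`K_φ(t) = t - φ(t)/φ'(t)` on `(0,1)`, then `φ₁ = φ₂` on `(0,1)`. -/
theorem stmt_19 (φ₁ φ₂ φ₁' φ₂' : ℝ → ℝ)
    (hderiv₁ : ∀ t ∈ Set.Ioo (0:ℝ) 1, HasDerivAt φ₁ (φ₁' t) t)
    (hderiv₂ : ∀ t ∈ Set.Ioo (0:ℝ) 1, HasDerivAt φ₂ (φ₂' t) t)
    (hderivCont₁ : ContinuousOn φ₁' (Set.Ioo 0 1))
    (hderivCont₂ : ContinuousOn φ₂' (Set.Ioo 0 1))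
    (hneg₁ : ∀ t ∈ Set.Ioo (0:ℝ) 1, φ₁' t < 0)
    (hneg₂ : ∀ t ∈ Set.Ioo (0:ℝ) 1, φ₂' t < 0)
    (hanti₁ : StrictAntiOn φ₁ (Set.Ioc 0 1)) (hanti₂ : StrictAntiOn φ₂ (Set.Ioc 0 1))
    (hone₁ : φ₁ 1 = 0) (hone₂ : φ₂ 1 = 0)
    (u₀ : ℝ) (hu₀ : u₀ ∈ Set.Ioo (0:ℝ) 1)
    (hnorm₁ : φ₁ u₀ = 1) (hnorm₂ : φ₂ u₀ = 1)
    (hK : ∀ t ∈ Set.Ioo (0:ℝ) 1, t - φ₁ t / φ₁' t = t - φ₂ t / φ₂' t) :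
    ∀ t ∈ Set.Ioo (0:ℝ) 1, φ₁ t = φ₂ t := by
  -- φ₂ is positive on (0,1)
  have hpos₂ : ∀ t ∈ Set.Ioo (0:ℝ) 1, 0 < φ₂ t := by
    intro t ht
    have := hanti₂ (Set.mem_Ioc.mpr ⟨ht.1, ht.2.le⟩) (Set.mem_Ioc.mpr ⟨zero_lt_one, le_rfl⟩) ht.2
    rwa [hone₂] at this
  -- cross-multiplied relation
  have hcross : ∀ t ∈ Set.Ioo (0:ℝ) 1, φ₁ t * φ₂' t = φ₂ t * φ₁' t := by
    intro t ht
    have h := hK t ht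
    have h1 : φ₁ t / φ₁' t = φ₂ t / φ₂' t := by linarith
    have hne₁ : φ₁' t ≠ 0 := (hneg₁ t ht).ne
    have hne₂ : φ₂' t ≠ 0 := (hneg₂ t ht).ne
    field_simp at h1
    linarith
  -- the ratio φ₁/φ₂ has derivative 0 on (0,1)
  set g : ℝ → ℝ := fun t => φ₁ t / φ₂ t with hg
  have hgderiv : ∀ t ∈ Set.Ioo (0:ℝ) 1, HasDerivAt g 0 t := by
    intro t ht
    have hne : φ₂ t ≠ 0 := (hpos₂ t ht).ne'
    have := (hderiv₁ t ht).div (hderiv₂ t ht) hne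
    have hval : (φ₁' t * φ₂ t - φ₁ t * φ₂' t) / φ₂ t ^ 2 = 0 := by
      rw [div_eq_zero_iff]
      left
      have := hcross t ht
      linarith
    rwa [hval] at this
  have hconv : Convex ℝ (Set.Ioo (0:ℝ) 1) := convex_Ioo 0 1
  have hopen : IsOpen (Set.Ioo (0:ℝ) 1) := isOpen_Ioo
  have hconst : ∀ t ∈ Set.Ioo (0:ℝ) 1, g t = g u₀ := by
    intro t ht
    apply hconv.is_const_of_fderivWithin_eq_zero
      (fun x hx => ((hgderiv x hx).differentiableAt).differentiableWithinAt)
      (fun x hx => ?_) ht hu₀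
    rw [fderivWithin_of_isOpen hopen hx]
    have := ((hgderiv x hx).hasFDerivAt).fderiv
    rw [this]
    ext y
    simp
  intro t ht
  have h := hconst t ht
  have hgu : g u₀ = 1 := by simp [hg, hnorm₁, hnorm₂]
  have hne : φ₂ t ≠ 0 := (hpos₂ t ht).ne'
  rw [hgu] at h
  simp only [hg] at h
  rw [div_eq_one_iff_eq hne] at h
  exact h
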